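/- The relation ≤_P on R[x₁,…,x_n]^k, defined by p ≤_P q iff p = q or δ̂(coefficient of Lm(p−q) in p) < δ̂(coefficient of Lm(p−q) in q), is a well order: it is a total order with no infinite strictly descending chains. -/

import Mathlib

open MvPolynomial

/-- Polynomial vectors: `R[x₁,…,x_n]^k`. -/
abbrev PolyVec (R : Type*) [CommSemiring R] (n k : ℕ) := Fin k → MvPolynomial (Fin n) R

/-- Monomial vectors `x^α e_i`, encoded as pairs `(α, i)`. -/
abbrev MonV (n k : ℕ) := (Fin n →₀ ℕ) × Fin k

/-- An admissible order on monomial vectors. -/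
structure AdmissibleOrder (n k : ℕ) where
  le : MonV n k → MonV n k → Prop
  refl : ∀ a, le a a
  trans : ∀ a b c, le a b → le b c → le a c
  antisymm : ∀ a b, le a b → le b a → a = b
  total : ∀ a b, le a b ∨ le b a
  dvd_le : ∀ (α β : Fin n →₀ ℕ) (i : Fin k), (∀ m, α m ≤ β m) → le (α, i) (β, i)
  add_le : ∀ (α β γ : Fin n →₀ ℕ) (i j : Fin k),
    le (α, i) (β, j) → le (α + γ, i) (β + γ, j)

variable {R : Type*} [CommRing R] {n k : ℕ}

/-- `m` is the leading monomial vector of `f` w.r.t. the admissible order `r`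
(so in particular `f ≠ 0`). -/
def IsDeg (r : AdmissibleOrder n k) (f : PolyVec R n k) (m : MonV n k) : Prop :=
  (f m.2).coeff m.1 ≠ 0 ∧ ∀ m' : MonV n k, (f m'.2).coeff m'.1 ≠ 0 → r.le m' m

/-- The leading term vector of `g` divides the leading term vector of `f`:
same position, componentwise smaller exponent, and the leading coefficient of `g`
divides that of `f` in `R`. -/
def LtDvd (r : AdmissibleOrder n k) (g f : PolyVec R n k) : Prop :=
  ∃ mg mf : MonV n k, IsDeg r g mg ∧ IsDeg r f mf ∧ mg.2 = mf.2 ∧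
    (∀ m, mg.1 m ≤ mf.1 m) ∧ (g mg.2).coeff mg.1 ∣ (f mf.2).coeff mf.1

/-- `G` is a strong Gröbner basis of the submodule `I` w.r.t. `r`. -/
def IsSGB (r : AdmissibleOrder n k) (G : Set (PolyVec R n k))
    (I : Submodule (MvPolynomial (Fin n) R) (PolyVec R n k)) : Prop :=
  (∀ g ∈ G, g ∈ I ∧ g ≠ 0) ∧
  ∀ f ∈ I, f ≠ 0 → ∃ g ∈ G, LtDvd r g f

/-- Multiplication of a polynomial vector by the term `a·x^m`. -/
noncomputable def termSMul (m : Fin n →₀ ℕ) (a : R) (g : PolyVec R n k) : PolyVec R n k :=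
  fun j => MvPolynomial.monomial m a * g j

/-- `f` has a strong standard representation by `G`: `f = Σ aᵢ mᵢ gᵢ` with `gᵢ ∈ G`,
`Lm(m₁g₁) = Lm(f)` and `Lm(mᵢgᵢ) < Lm(f)` for `i ≥ 2`. -/
def IsSSR (r : AdmissibleOrder n k) (G : Set (PolyVec R n k)) (f : PolyVec R n k) : Prop :=
  ∃ (N : ℕ) (hN : 0 < N) (a : Fin N → R) (m : Fin N → (Fin n →₀ ℕ))
    (g : Fin N → PolyVec R n k),
    (∀ i, g i ∈ G) ∧
    f = ∑ i, termSMul (m i) (a i) (g i) ∧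
    ∃ mf m0 : MonV n k, IsDeg r f mf ∧ IsDeg r (g ⟨0, hN⟩) m0 ∧
      ((m ⟨0, hN⟩ + m0.1, m0.2) : MonV n k) = mf ∧
      ∀ i : Fin N, i ≠ ⟨0, hN⟩ → ∃ mi : MonV n k, IsDeg r (g i) mi ∧
        r.le (m i + mi.1, mi.2) mf ∧ ((m i + mi.1, mi.2) : MonV n k) ≠ mf

/-- `h` is an `S`-polynomial vector of the ordered pair `(f, g)` w.r.t. the
Euclidean grading `δ`. -/
def IsSPolyPair {W : Type*} [LinearOrder W] (δ : R → W) (r : AdmissibleOrder n k)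
    (f g h : PolyVec R n k) : Prop :=
  ∃ mf mg : MonV n k, IsDeg r f mf ∧ IsDeg r g mg ∧
    ((mf.2 ≠ mg.2 ∧ h = 0) ∨
     (mf.2 = mg.2 ∧ δ ((g mg.2).coeff mg.1) ≤ δ ((f mf.2).coeff mf.1) ∧
       ∃ q : R,
         δ ((f mf.2).coeff mf.1 - q * (g mg.2).coeff mg.1) < δ ((f mf.2).coeff mf.1) ∧
         h = termSMul ((mf.1 ⊔ mg.1) - mg.1) 1 f - termSMul ((mf.1 ⊔ mg.1) - mf.1) q g))

/-- `h` is an `S`-polynomial vector of the (unordered) set `{f, g}`. -/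
def IsSPolySet {W : Type*} [LinearOrder W] (δ : R → W) (r : AdmissibleOrder n k)
    (f g h : PolyVec R n k) : Prop :=
  IsSPolyPair δ r f g h ∨ IsSPolyPair δ r g f h

/-- The order `≤_P` on polynomial vectors: `p ≤_P q` iff `p = q` or the coefficient of
`Lm(p − q)` in `p` is `δ̂`-smaller than the one in `q`. -/
def LeP {R : Type*} [CommRing R] {n k : ℕ} {W' : Type*} [LinearOrder W']
    (dh : R → W') (r : AdmissibleOrder n k) (p q : PolyVec R n k) : Prop :=
  p = q ∨ ∃ m : MonV n k, IsDeg r (p - q) m ∧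
    dh ((p m.2).coeff m.1) < dh ((q m.2).coeff m.1)

section LePAux

variable {R : Type*} [CommRing R] {n k : ℕ}

/-- The linear order on monomial vectors coming from an admissible order. -/
@[reducible] noncomputable def AdmissibleOrder.lo (r : AdmissibleOrder n k) : LinearOrder (MonV n k) where
  le := r.le
  lt := fun a b => r.le a b ∧ ¬ r.le b a
  lt_iff_le_not_ge := fun _ _ => Iff.rfl
  min := fun a b => @ite _ (r.le a b) (Classical.decRel _ a b) a b
  max := fun a b => @ite _ (r.le a b) (Classical.decRel _ a b) b a
  min_def := fun _ _ => rfl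
  max_def := fun _ _ => rfl
  le_refl := r.refl
  le_trans := r.trans
  le_antisymm := r.antisymm
  le_total := r.total
  toDecidableLE := Classical.decRel _

lemma PolyVec.coeff_sub (p q : PolyVec R n k) (m : MonV n k) :
    ((p - q) m.2).coeff m.1 = (p m.2).coeff m.1 - (q m.2).coeff m.1 := by
  show ((p m.2 - q m.2)).coeff m.1 = _
  rw [MvPolynomial.coeff_sub]

lemma isDeg_unique {r : AdmissibleOrder n k} {f : PolyVec R n k} {m m' : MonV n k}
    (h : IsDeg r f m) (h' : IsDeg r f m') : m = m' :=
  r.antisymm _ _ (h'.2 _ h.1) (h.2 _ h'.1)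

lemma isDeg_neg_swap {r : AdmissibleOrder n k} {p q : PolyVec R n k} {m : MonV n k}
    (h : IsDeg r (p - q) m) : IsDeg r (q - p) m := by
  constructor
  · intro h0
    apply h.1
    rw [PolyVec.coeff_sub] at h0 ⊢
    rw [sub_eq_zero] at h0 ⊢
    exact h0.symm
  · intro m' hm'
    apply h.2
    rw [PolyVec.coeff_sub] at hm' ⊢
    intro h0
    exact hm' (by rw [sub_eq_zero] at h0 ⊢; exact h0.symm)

lemma exists_isDeg (r : AdmissibleOrder n k) (f : PolyVec R n k) (hf : f ≠ 0) :
    ∃ m : MonV n k, IsDeg r f m := by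
  classical
  letI := r.lo
  set S : Finset (MonV n k) :=
    Finset.univ.biUnion (fun j : Fin k => (f j).support.image (fun α => (α, j))) with hS
  have hmem : ∀ m : MonV n k, m ∈ S ↔ (f m.2).coeff m.1 ≠ 0 := by
    intro m
    simp only [hS, Finset.mem_biUnion, Finset.mem_univ, true_and, Finset.mem_image,
      MvPolynomial.mem_support_iff]
    constructor
    · rintro ⟨j, α, hα, rfl⟩; exact hα
    · intro h; exact ⟨m.2, m.1, h, rfl⟩
  have hne : S.Nonempty := by
    by_contra h
    apply hf
    funext j
    apply MvPolynomial.ext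
    intro α
    rw [Pi.zero_apply, MvPolynomial.coeff_zero]
    by_contra h0
    exact h ⟨(α, j), (hmem (α, j)).2 h0⟩
  refine ⟨S.max' hne, (hmem _).1 (S.max'_mem hne), fun m' hm' => ?_⟩
  exact S.le_max' m' ((hmem m').2 hm')

/-- A polynomial vector as a finitely supported function on monomial vectors. -/
noncomputable def PolyVec.toF (p : PolyVec R n k) : MonV n k →₀ R :=
  Finsupp.onFinset
    (Finset.univ.biUnion (fun j : Fin k => (p j).support.image (fun α => (α, j))))
    (fun m => (p m.2).coeff m.1)
    (by
      intro m hm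
      simp only [Finset.mem_biUnion, Finset.mem_univ, true_and, Finset.mem_image,
        MvPolynomial.mem_support_iff]
      exact ⟨m.2, m.1, hm, rfl⟩)

@[simp] lemma PolyVec.toF_apply (p : PolyVec R n k) (m : MonV n k) :
    p.toF m = (p m.2).coeff m.1 := rfl

end LePAux

/-- The relation `≤_P` is a well order on `R[x₁,…,x_n]^k`: it is a
total order and has no infinite strictly descending chains. -/
theorem leP_well_order
    {R : Type*} [CommRing R] [IsDomain R] {n k : ℕ}
    {W : Type*} [LinearOrder W] [WellFoundedLT W]
    {W' : Type*} [LinearOrder W'] [WellFoundedLT W']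
    (δ : R → W)
    (hzero : ∀ a : R, δ 0 ≤ δ a)
    (hmul : ∀ a b : R, a ≠ 0 → δ b ≤ δ (a * b))
    (hdiv : ∀ a b : R, a ≠ 0 → ∃ q s : R, b = q * a + s ∧ δ s < δ a)
    (dh : R → W') (hinj : Function.Injective dh)
    (dh0 : ∀ a : R, dh 0 ≤ dh a)
    (hmono : ∀ a b : R, δ a < δ b → dh a < dh b)
    (r : AdmissibleOrder n k) :
    (∀ p, LeP dh r p p) ∧
    (∀ p q s, LeP dh r p q → LeP dh r q s → LeP dh r p s) ∧
    (∀ p q, LeP dh r p q → LeP dh r q p → p = q) ∧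
    (∀ p q, LeP dh r p q ∨ LeP dh r q p) ∧
    ¬ ∃ f : ℕ → PolyVec R n k, ∀ i, LeP dh r (f (i + 1)) (f i) ∧ f (i + 1) ≠ f i := by
  classical
  letI := r.lo
  have hsplit : ∀ p q s : PolyVec R n k, ∀ m' : MonV n k,
      ((p - s) m'.2).coeff m'.1 ≠ 0 →
      ((p - q) m'.2).coeff m'.1 ≠ 0 ∨ ((q - s) m'.2).coeff m'.1 ≠ 0 := by
    intro p q s m' h0
    by_contra hc
    push_neg at hc
    obtain ⟨e1, e2⟩ := hc
    rw [PolyVec.coeff_sub, sub_eq_zero] at e1 e2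
    exact h0 (by rw [PolyVec.coeff_sub, e1, e2, sub_self])
  have htrans : ∀ p q s, LeP dh r p q → LeP dh r q s → LeP dh r p s := by
    intro p q s hpq hqs
    rcases hpq with rfl | ⟨m1, hm1, h1⟩
    · exact hqs
    rcases hqs with rfl | ⟨m2, hm2, h2⟩
    · exact Or.inr ⟨m1, hm1, h1⟩
    right
    rcases lt_trichotomy m1 m2 with hlt | heq | hlt
    · -- leading monomial of p - s is m2
      have hpq0 : ((p - q) m2.2).coeff m2.1 = 0 := by
        by_contra h0
        exact hlt.2 (hm1.2 _ h0)
      rw [PolyVec.coeff_sub, sub_eq_zero] at hpq0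
      have hps : ((p - s) m2.2).coeff m2.1 = ((q - s) m2.2).coeff m2.1 := by
        rw [PolyVec.coeff_sub, PolyVec.coeff_sub, hpq0]
      refine ⟨m2, ⟨by rw [hps]; exact hm2.1, ?_⟩, by rw [hpq0]; exact h2⟩
      intro m' hm'
      rcases hsplit p q s m' hm' with h | h
      · exact r.trans _ _ _ (hm1.2 _ h) hlt.1
      · exact hm2.2 _ h
    · subst heq
      have h3 : dh ((p m1.2).coeff m1.1) < dh ((s m1.2).coeff m1.1) := h1.trans h2
      refine ⟨m1, ⟨?_, ?_⟩, h3⟩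
      · intro h0
        rw [PolyVec.coeff_sub, sub_eq_zero] at h0
        rw [h0] at h3
        exact lt_irrefl _ h3
      · intro m' hm'
        rcases hsplit p q s m' hm' with h | h
        · exact hm1.2 _ h
        · exact hm2.2 _ h
    · -- leading monomial of p - s is m1
      have hqs0 : ((q - s) m1.2).coeff m1.1 = 0 := by
        by_contra h0
        exact hlt.2 (hm2.2 _ h0)
      rw [PolyVec.coeff_sub, sub_eq_zero] at hqs0
      have hps : ((p - s) m1.2).coeff m1.1 = ((p - q) m1.2).coeff m1.1 := by
        rw [PolyVec.coeff_sub, PolyVec.coeff_sub, hqs0]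
      refine ⟨m1, ⟨by rw [hps]; exact hm1.1, ?_⟩, by rw [← hqs0]; exact h1⟩
      intro m' hm'
      rcases hsplit p q s m' hm' with h | h
      · exact hm1.2 _ h
      · exact r.trans _ _ _ (hm2.2 _ h) hlt.1
  have hanti : ∀ p q, LeP dh r p q → LeP dh r q p → p = q := by
    intro p q hpq hqp
    rcases hpq with rfl | ⟨m1, hm1, h1⟩
    · rfl
    rcases hqp with rfl | ⟨m2, hm2, h2⟩
    · rfl
    obtain rfl := isDeg_unique hm1 (isDeg_neg_swap hm2)
    exact absurd h2 h1.asymm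
  have htot : ∀ p q, LeP dh r p q ∨ LeP dh r q p := by
    intro p q
    by_cases hpq : p = q
    · exact Or.inl (Or.inl hpq)
    obtain ⟨m, hm⟩ := exists_isDeg r (p - q) (sub_ne_zero.mpr hpq)
    have hne : (p m.2).coeff m.1 ≠ (q m.2).coeff m.1 := by
      intro h0
      apply hm.1
      rw [PolyVec.coeff_sub, h0, sub_self]
    rcases (hinj.ne hne).lt_or_gt with h | h
    · exact Or.inl (Or.inr ⟨m, hm, h⟩)
    · exact Or.inr (Or.inr ⟨m, isDeg_neg_swap hm, h⟩)
  refine ⟨fun p => Or.inl rfl, htrans, hanti, htot, ?_⟩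
  rintro ⟨f, hf⟩
  set sR : R → R → Prop := fun a b => dh a < dh b with hsR
  set rlt : MonV n k → MonV n k → Prop := fun a b => r.le a b ∧ ¬ r.le b a with hrlt
  set pos : MonV n k → MonV n k → Prop := Function.swap rlt with hpos
  haveI : IsTrichotomous (MonV n k) pos := ⟨fun a b h1 h2 => ((show pos a b ∨ a = b ∨ pos b a by
    by_cases hab : a = b
    · exact Or.inr (Or.inl hab)
    rcases r.total a b with h | h
    · exact Or.inr (Or.inr ⟨h, fun hba => hab (r.antisymm _ _ h hba)⟩)
    · exact Or.inl ⟨h, fun hba => hab (r.antisymm _ _ hba h)⟩).resolve_left h1).resolve_right h2⟩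
  haveI : IsIrrefl (MonV n k) rlt := ⟨fun a h => h.2 h.1⟩
  haveI : IsTrans (MonV n k) rlt := ⟨fun a b c h1 h2 =>
    ⟨r.trans _ _ _ h1.1 h2.1, fun hca => h1.2 (r.trans _ _ _ h2.1 hca)⟩⟩
  haveI : IsStrictOrder (MonV n k) rlt := { }
  have hltwf : WellFounded rlt := by
    rw [RelEmbedding.wellFounded_iff_isEmpty]
    refine ⟨fun emb => ?_⟩
    obtain ⟨j0, hj0⟩ := Finite.exists_infinite_fiber (fun i => ((emb i : MonV n k)).2)
    haveI := hj0
    set e := Nat.Subtype.orderIsoOfNat ((fun i => ((emb i : MonV n k)).2) ⁻¹' {j0}) with he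
    set g : ℕ → MonV n k := fun i => emb (e i : ℕ) with hg
    have hg2 : ∀ i, (g i).2 = j0 := fun i => (e i).2
    have hPWO : Set.IsPWO (Set.univ : Set (Fin n → ℕ)) :=
      Set.isPWO_of_wellQuasiOrderedLE _
    obtain ⟨a, b, hab, hle⟩ := (Set.isPWO_univ_iff.mp hPWO).wqo (fun i => ⇑(g i).1)
    have hlt : rlt (g b) (g a) := by
      apply emb.map_rel_iff.mpr
      exact Subtype.coe_lt_coe.mpr (e.strictMono hab)
    have hle' : r.le (g a) (g b) := by
      have h := r.dvd_le (g a).1 (g b).1 j0 (fun m => hle m)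
      have ha : ((g a).1, j0) = g a := by rw [← hg2 a]
      have hb : ((g b).1, j0) = g b := by rw [← hg2 b]
      rwa [ha, hb] at h
    exact hlt.2 hle'
  have hbot : ∀ ⦃a : R⦄, ¬ sR a 0 := fun a h => absurd h (not_lt.mpr (dh0 a))
  have hsw : WellFounded sR := InvImage.wf dh wellFounded_lt
  have hwfL : WellFounded (Finsupp.Lex pos sR) :=
    Finsupp.Lex.wellFounded' hbot hsw hltwf
  have key : ∀ p q : PolyVec R n k, LeP dh r p q → p ≠ q →
      Finsupp.Lex pos sR (PolyVec.toF p) (PolyVec.toF q) := by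
    intro p q hpq hne
    rcases hpq with rfl | ⟨m, hm, h1⟩
    · exact absurd rfl hne
    refine Finsupp.lex_def.mpr ⟨m, ?_, h1⟩
    intro j hj
    show (p j.2).coeff j.1 = (q j.2).coeff j.1
    by_contra hc
    have h0 : ((p - q) j.2).coeff j.1 ≠ 0 := by
      rw [PolyVec.coeff_sub, sub_ne_zero]
      exact hc
    exact hj.2 (hm.2 _ h0)
  have hacc : ∀ x : MonV n k →₀ R, Acc (Finsupp.Lex pos sR) x →
      ∀ i, PolyVec.toF (f i) ≠ x := by
    intro x hx
    induction hx with
    | intro x _ ih =>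
      intro i hfx
      exact ih (PolyVec.toF (f (i + 1)))
        (hfx ▸ key _ _ (hf i).1 (hf i).2) (i + 1) rfl
  exact hacc _ (hwfL.apply _) 0 rfl
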